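/- (Theorem 3) Let M ≥ 2 users share a single collision channel with collision-free utilities u_n > 0, and let R_n(P) = u_n · P_n · Π_{i≠n}(1 − P_i) for P ∈ [0,1]^M. Then the Nash product Π_{n=1}^{M} R_n(P) (the Nash bargaining objective with disagreement point 0 for every user) attains its maximum over [0,1]^M at the unique point P_n = 1/M for all n; i.e., the equal-share probabilities 1/M achieve the Nash bargaining solution among the users sharing the channel. -/

import Mathlib

set_option maxHeartbeats 1000000

lemma nash_key_lt (k : ℕ) (hk : 1 ≤ k) (p : ℝ) (hp0 : 0 ≤ p) (hp1 : p ≤ 1)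
    (hne : p ≠ 1/((k:ℝ)+1)) :
    p * (1-p)^k < (1/((k:ℝ)+1)) * (1 - 1/((k:ℝ)+1))^k := by
  have hk1 : (1:ℝ) ≤ (k:ℝ) := by exact_mod_cast hk
  set a : ℝ := 1/((k:ℝ)+1) with ha_def
  clear_value a
  have ha : 0 < a := by rw [ha_def]; positivity
  have ha2 : a ≤ 1/2 := by
    rw [ha_def, div_le_div_iff₀ (by linarith) (by norm_num)]; linarith
  have hb : 0 < 1 - a := by linarith
  have hab : a ≤ 1 - a := by linarith
  have hRpos : 0 < a * (1-a)^k := by positivity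
  rcases eq_or_lt_of_le hp0 with h0 | h0
  · rw [← h0]; simpa using hRpos
  rcases eq_or_lt_of_le hp1 with h1 | h1
  · rw [h1]; simp only [sub_self]
    rw [zero_pow (by omega)]; simpa using hRpos
  have hka : (k:ℝ) * a = 1 - a := by
    rw [ha_def]; field_simp; ring
  rcases lt_trichotomy p a with hpa | hpa | hpa
  · -- p < a
    set x : ℝ := (a - p)/(1-a) with hx_def
    clear_value x
    have hx0 : 0 < x := by
      rw [hx_def]; exact div_pos (by linarith) hb
    have hx1 : x < 1 := by
      rw [hx_def, div_lt_one hb]; linarith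
    have e1 : p = a * (1 - (k:ℝ)*x) := by
      rw [hx_def]; field_simp; nlinarith [hka]
    have e2 : 1 - p = (1-a) * (1+x) := by
      rw [hx_def]; field_simp; ring
    have hbern : 1 - (k:ℝ)*x ≤ (1-x)^k := by
      have := one_add_mul_le_pow (a := -x) (by linarith) k
      rw [← sub_eq_add_neg] at this; linarith
    have hmul : (1 - (k:ℝ)*x) * (1+x)^k ≤ (1-x^2)^k := by
      calc (1 - (k:ℝ)*x) * (1+x)^k ≤ (1-x)^k * (1+x)^k := by
            apply mul_le_mul_of_nonneg_right hbern (pow_nonneg (by linarith) k)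
        _ = (1-x^2)^k := by rw [← mul_pow]; ring_nf
    have h2a : (0:ℝ) ≤ 1 - x^2 := by nlinarith
    have h2b : 1 - x^2 < 1 := by nlinarith
    have hlt1 : (1-x^2)^k < 1 := pow_lt_one₀ h2a h2b (by omega)
    calc p * (1-p)^k = a * ((1 - (k:ℝ)*x) * (1+x)^k) * (1-a)^k := by
          rw [e2, mul_pow, e1]; ring
      _ ≤ a * (1-x^2)^k * (1-a)^k := by
          apply mul_le_mul_of_nonneg_right _ (pow_nonneg hb.le k)
          exact mul_le_mul_of_nonneg_left hmul ha.le
      _ < a * 1 * (1-a)^k := by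
          apply mul_lt_mul_of_pos_right _ (pow_pos hb k)
          exact mul_lt_mul_of_pos_left hlt1 ha
      _ = a * (1-a)^k := by ring
  · exact absurd hpa hne
  · -- p > a
    set x : ℝ := (p - a)/(1-a) with hx_def
    clear_value x
    have hx0 : 0 < x := by
      rw [hx_def]; exact div_pos (by linarith) hb
    have hx1 : x < 1 := by
      rw [hx_def, div_lt_one hb]; linarith
    have e1 : p = a * (1 + (k:ℝ)*x) := by
      rw [hx_def]; field_simp; nlinarith [hka]
    have e2 : 1 - p = (1-a) * (1-x) := by
      rw [hx_def]; field_simp; ring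
    have hbern : 1 + (k:ℝ)*x ≤ (1+x)^k := one_add_mul_le_pow (by linarith) k
    have hmul : (1 + (k:ℝ)*x) * (1-x)^k ≤ (1-x^2)^k := by
      calc (1 + (k:ℝ)*x) * (1-x)^k ≤ (1+x)^k * (1-x)^k := by
            apply mul_le_mul_of_nonneg_right hbern (pow_nonneg (by linarith) k)
        _ = (1-x^2)^k := by rw [← mul_pow]; ring_nf
    have h2a : (0:ℝ) ≤ 1 - x^2 := by nlinarith
    have h2b : 1 - x^2 < 1 := by nlinarith
    have hlt1 : (1-x^2)^k < 1 := pow_lt_one₀ h2a h2b (by omega)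
    calc p * (1-p)^k = a * ((1 + (k:ℝ)*x) * (1-x)^k) * (1-a)^k := by
          rw [e2, mul_pow, e1]; ring
      _ ≤ a * (1-x^2)^k * (1-a)^k := by
          apply mul_le_mul_of_nonneg_right _ (pow_nonneg hb.le k)
          exact mul_le_mul_of_nonneg_left hmul ha.le
      _ < a * 1 * (1-a)^k := by
          apply mul_lt_mul_of_pos_right _ (pow_pos hb k)
          exact mul_lt_mul_of_pos_left hlt1 ha
      _ = a * (1-a)^k := by ring

lemma nash_key_le (k : ℕ) (hk : 1 ≤ k) (p : ℝ) (hp0 : 0 ≤ p) (hp1 : p ≤ 1) :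
    p * (1-p)^k ≤ (1/((k:ℝ)+1)) * (1 - 1/((k:ℝ)+1))^k := by
  by_cases h : p = 1/((k:ℝ)+1)
  · rw [h]
  · exact (nash_key_lt k hk p hp0 hp1 h).le

/-- Theorem 3: the Nash product `∏ R_n(P)` over `[0,1]^M` attains its
maximum at the unique point `P_n = 1/M` for all `n`. -/
theorem nash_product_max (M : ℕ) (hM : 2 ≤ M) (u : Fin M → ℝ) (hu : ∀ n, 0 < u n)
    (R : (Fin M → ℝ) → Fin M → ℝ)
    (hR : ∀ P n, R P n =
      u n * P n * ∏ i ∈ Finset.univ.filter (fun i => i ≠ n), (1 - P i)) :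
    (∀ P : Fin M → ℝ, (∀ n, P n ∈ Set.Icc (0:ℝ) 1) →
        ∏ n : Fin M, R P n ≤ ∏ n : Fin M, R (fun _ => 1 / (M : ℝ)) n) ∧
    (∀ P : Fin M → ℝ, (∀ n, P n ∈ Set.Icc (0:ℝ) 1) →
        ∏ n : Fin M, R P n = ∏ n : Fin M, R (fun _ => 1 / (M : ℝ)) n →
        P = fun _ => 1 / (M : ℝ)) := by
  set k := M - 1 with hkdef
  have hMk : M = k + 1 := by omega
  have hk1 : 1 ≤ k := by omega
  have hMcast : (M:ℝ) = (k:ℝ) + 1 := by rw [hMk]; push_cast; ring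
  set c : ℝ := 1/((k:ℝ)+1) with hc
  have hcM : 1/(M:ℝ) = c := by rw [hMcast]
  have hc0 : 0 < c := by rw [hc]; positivity
  have hc1 : c ≤ 1 := by
    rw [hc, div_le_one (by positivity)]
    have : (0:ℝ) ≤ (k:ℝ) := Nat.cast_nonneg k
    linarith
  -- count lemma
  have hcard : ∀ i : Fin M, (Finset.univ.filter (fun n : Fin M => i ≠ n)).card = k := by
    intro i
    rw [Finset.filter_ne, Finset.card_erase_of_mem (Finset.mem_univ i)]
    simp [hkdef]
  have hcard' : ∀ n : Fin M, (Finset.univ.filter (fun i : Fin M => i ≠ n)).card = k := by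
    intro n
    rw [Finset.filter_ne', Finset.card_erase_of_mem (Finset.mem_univ n)]
    simp [hkdef]
  -- product identity
  have hprod : ∀ P : Fin M → ℝ,
      ∏ n : Fin M, R P n = (∏ n : Fin M, u n) * ∏ n : Fin M, (P n * (1 - P n)^k) := by
    intro P
    simp only [hR]
    rw [Finset.prod_mul_distrib, Finset.prod_mul_distrib, Finset.prod_mul_distrib]
    have hC : ∏ n : Fin M, ∏ i ∈ Finset.univ.filter (fun i => i ≠ n), (1 - P i)
        = ∏ i : Fin M, (1 - P i)^k := by
      have h1 : ∀ n : Fin M, ∏ i ∈ Finset.univ.filter (fun i => i ≠ n), (1 - P i)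
          = ∏ i : Fin M, (if i ≠ n then 1 - P i else 1) := by
        intro n; rw [Finset.prod_filter]
      simp only [h1]
      rw [Finset.prod_comm]
      congr 1
      funext i
      rw [← Finset.prod_filter, Finset.prod_const, hcard i]
    rw [hC]
    ring
  have hUpos : 0 < ∏ n : Fin M, u n := Finset.prod_pos (fun n _ => hu n)
  have hgc : ∀ n : Fin M, R (fun _ => 1/(M:ℝ)) n = u n * (c * (1-c)^k) := by
    intro n
    rw [hR]
    simp only [hcM]
    rw [Finset.prod_const, hcard' n]
    ring
  have hgcpos : 0 < c * (1-c)^k := by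
    have : c < 1 := by
      rw [hc, div_lt_one (by positivity)]
      have : (1:ℝ) ≤ (k:ℝ) := by exact_mod_cast hk1
      linarith
    have : 0 < 1 - c := by linarith
    positivity
  have hprodc : ∏ n : Fin M, R (fun _ => 1/(M:ℝ)) n
      = (∏ n : Fin M, u n) * ∏ n : Fin M, (c * (1-c)^k) := by
    rw [hprod]
    congr 1
    apply Finset.prod_congr rfl
    intro n _
    simp [hcM]
  constructor
  · intro P hP
    rw [hprod P, hprodc]
    apply mul_le_mul_of_nonneg_left _ hUpos.le
    apply Finset.prod_le_prod
    · intro n _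
      have h0 := (hP n).1; have h1 := (hP n).2
      have : 0 ≤ 1 - P n := by linarith
      positivity
    · intro n _
      exact nash_key_le k hk1 (P n) (hP n).1 (hP n).2
  · intro P hP heq
    by_contra hne
    have : ∃ j : Fin M, P j ≠ c := by
      by_contra hall
      push_neg at hall
      apply hne
      funext n
      rw [hall n, hcM]
    obtain ⟨j, hj⟩ := this
    have hglt : P j * (1 - P j)^k < c * (1-c)^k :=
      nash_key_lt k hk1 (P j) (hP j).1 (hP j).2 hj
    have hgnonneg : ∀ n : Fin M, 0 ≤ P n * (1 - P n)^k := by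
      intro n
      have h0 := (hP n).1; have h1 := (hP n).2
      have : 0 ≤ 1 - P n := by linarith
      positivity
    have hstep : ∏ n : Fin M, (P n * (1 - P n)^k) < ∏ n : Fin M, (c * (1-c)^k) := by
      rw [← Finset.mul_prod_erase Finset.univ _ (Finset.mem_univ j),
          ← Finset.mul_prod_erase Finset.univ (fun _ => c * (1-c)^k) (Finset.mem_univ j)]
      have hrest : ∏ n ∈ Finset.univ.erase j, (P n * (1 - P n)^k)
          ≤ ∏ n ∈ Finset.univ.erase j, (c * (1-c)^k) := by
        apply Finset.prod_le_prod
        · intro n _; exact hgnonneg n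
        · intro n _; exact nash_key_le k hk1 (P n) (hP n).1 (hP n).2
      have hrestpos : 0 < ∏ n ∈ Finset.univ.erase j, (c * (1-c)^k) :=
        Finset.prod_pos (fun n _ => hgcpos)
      calc (P j * (1 - P j)^k) * ∏ n ∈ Finset.univ.erase j, (P n * (1 - P n)^k)
          ≤ (P j * (1 - P j)^k) * ∏ n ∈ Finset.univ.erase j, (c * (1-c)^k) :=
            mul_le_mul_of_nonneg_left hrest (hgnonneg j)
        _ < (c * (1-c)^k) * ∏ n ∈ Finset.univ.erase j, (c * (1-c)^k) :=
            mul_lt_mul_of_pos_right hglt hrestpos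
    have : ∏ n : Fin M, R P n < ∏ n : Fin M, R (fun _ => 1/(M:ℝ)) n := by
      rw [hprod P, hprodc]
      exact mul_lt_mul_of_pos_left hstep hUpos
    linarith [heq ▸ this]
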